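/- Let M ∈ M₃(ℝ) have rank at most 2, with nonzero singular values among s, t ≥ 0 (so the singular values of M are s, t, 0). Then K(M) is unitarily equivalent to the operator H_{s,t} = s·S_x⊗S_x + t·S_z⊗S_z on ℂ³ ⊗ ℂ³; i.e., there exists a unitary W ∈ M₉(ℂ) with W K(M) W† = H_{s,t}. -/

import Mathlib

open Matrix Polynomial
open scoped Kronecker Matrix.Norms.L2Operator

noncomputable def Sx : Matrix (Fin 3) (Fin 3) ℂ :=
  ((Real.sqrt 2 : ℝ) : ℂ)⁻¹ • !![0, 1, 0; 1, 0, 1; 0, 1, 0]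

noncomputable def Sy : Matrix (Fin 3) (Fin 3) ℂ :=
  ((Real.sqrt 2 : ℝ) : ℂ)⁻¹ •
    !![0, -Complex.I, 0; Complex.I, 0, -Complex.I; 0, Complex.I, 0]

def Sz : Matrix (Fin 3) (Fin 3) ℂ := !![1, 0, 0; 0, 0, 0; 0, 0, -1]

noncomputable def Svec : Fin 3 → Matrix (Fin 3) (Fin 3) ℂ := ![Sx, Sy, Sz]

noncomputable def Sdir (u : Fin 3 → ℝ) : Matrix (Fin 3) (Fin 3) ℂ :=
  (u 0 : ℂ) • Sx + (u 1 : ℂ) • Sy + (u 2 : ℂ) • Sz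

noncomputable def Bell (a a' b b' : Fin 3 → ℝ) :
    Matrix (Fin 3 × Fin 3) (Fin 3 × Fin 3) ℂ :=
  Sdir a ⊗ₖ Sdir b + Sdir a ⊗ₖ Sdir b' + Sdir a' ⊗ₖ Sdir b - Sdir a' ⊗ₖ Sdir b'

noncomputable def K (M : Matrix (Fin 3) (Fin 3) ℝ) :
    Matrix (Fin 3 × Fin 3) (Fin 3 × Fin 3) ℂ :=
  ∑ i : Fin 3, ∑ j : Fin 3, (M i j : ℂ) • (Svec i ⊗ₖ Svec j)

noncomputable def Hst (s t : ℝ) : Matrix (Fin 3 × Fin 3) (Fin 3 × Fin 3) ℂ :=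
  (s : ℂ) • (Sx ⊗ₖ Sx) + (t : ℂ) • (Sz ⊗ₖ Sz)


noncomputable def ket (i j : Fin 3) : (Fin 3 × Fin 3) → ℂ := Pi.single (i, j) 1

/-- `u` is a unit vector of `ℝ³`. -/
def IsUnitVec (u : Fin 3 → ℝ) : Prop := u 0 ^ 2 + u 1 ^ 2 + u 2 ^ 2 = 1


section AuxKS

noncomputable def cm (A : Matrix (Fin 3) (Fin 3) ℝ) : Matrix (Fin 3) (Fin 3) ℂ :=
  A.map (Complex.ofRealHom)

lemma cm_mul (A B : Matrix (Fin 3) (Fin 3) ℝ) : cm (A * B) = cm A * cm B :=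
  Matrix.map_mul

lemma cm_conjTranspose (A : Matrix (Fin 3) (Fin 3) ℝ) : (cm A)ᴴ = cm Aᵀ := by
  ext i j; simp [cm, Matrix.conjTranspose_apply]

lemma cm_one : cm 1 = 1 := by
  simp [cm]

def Ev : Fin 3 → Matrix (Fin 3) (Fin 3) ℝ :=
  ![!![0,0,0;0,0,1;0,-1,0], !![0,0,-1;0,0,0;1,0,0], !![0,1,0;-1,0,0;0,0,0]]

noncomputable def Em (a : Fin 3) : Matrix (Fin 3) (Fin 3) ℂ := cm (Ev a)

noncomputable def rr : ℂ := ((Real.sqrt 2 : ℝ) : ℂ)⁻¹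

noncomputable def Zm : Matrix (Fin 3) (Fin 3) ℂ :=
  !![-rr, Complex.I * rr, 0; 0, 0, 1; rr, Complex.I * rr, 0]

lemma rr_mul_rr : rr * rr = 1/2 := by
  rw [rr, ← mul_inv]
  norm_cast
  rw [Real.mul_self_sqrt (by norm_num)]
  norm_num

lemma Zm_unitary : Zm * Zmᴴ = 1 := by
  have h := rr_mul_rr
  ext i j
  fin_cases i <;> fin_cases j <;>
    simp [Zm, Matrix.mul_apply, Fin.sum_univ_three, Matrix.conjTranspose_apply, rr] <;>
    push_cast <;> ring_nf <;>
    simp [Complex.ext_iff] <;>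
    norm_num [← Complex.ofReal_pow, Real.sq_sqrt]

lemma Zm_unitary' : Zmᴴ * Zm = 1 := mul_eq_one_comm.mp Zm_unitary

lemma Svec_mul_Zm (a : Fin 3) : Svec a * Zm = Zm * ((-Complex.I) • Em a) := by
  fin_cases a <;> ext i j <;> fin_cases i <;> fin_cases j <;>
    simp [Svec, Sx, Sy, Sz, Zm, Em, cm, Ev, Matrix.mul_apply, Fin.sum_univ_three, rr,
      Matrix.vecHead, Matrix.vecTail] <;>
    try (ring_nf <;> norm_num [Complex.ext_iff, ← Complex.ofReal_pow, Real.sq_sqrt])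

lemma Svec_eq (a : Fin 3) : Svec a = Zm * ((-Complex.I) • Em a) * Zmᴴ := by
  calc Svec a = Svec a * (Zm * Zmᴴ) := by rw [Zm_unitary, mul_one]
  _ = (Svec a * Zm) * Zmᴴ := by rw [mul_assoc]
  _ = _ := by rw [Svec_mul_Zm]

set_option maxHeartbeats 800000 in
lemma covariance (R : Matrix (Fin 3) (Fin 3) ℝ) (h : Rᵀ = R.adjugate) (a : Fin 3) :
    R * Ev a * Rᵀ = ∑ i : Fin 3, R i a • Ev i := by
  have hh : ∀ i j : Fin 3, R j i = R.adjugate i j := fun i j => congrFun (congrFun h i) j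
  have e00 := hh 0 0; have e01 := hh 0 1; have e02 := hh 0 2
  have e10 := hh 1 0; have e11 := hh 1 1; have e12 := hh 1 2
  have e20 := hh 2 0; have e21 := hh 2 1; have e22 := hh 2 2
  simp [Matrix.adjugate_fin_three] at e00 e01 e02 e10 e11 e12 e20 e21 e22
  fin_cases a
  · ext j k; fin_cases j <;> fin_cases k <;>
      · simp [Ev, Matrix.mul_apply, Fin.sum_univ_three, Matrix.vecHead, Matrix.vecTail]
        (try simp only [e00, e01, e02]) <;> try ring
  · ext j k; fin_cases j <;> fin_cases k <;>
      · simp [Ev, Matrix.mul_apply, Fin.sum_univ_three, Matrix.vecHead, Matrix.vecTail]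
        (try simp only [e10, e11, e12]) <;> try ring
  · ext j k; fin_cases j <;> fin_cases k <;>
      · simp [Ev, Matrix.mul_apply, Fin.sum_univ_three, Matrix.vecHead, Matrix.vecTail]
        (try simp only [e20, e21, e22]) <;> try ring

lemma charpoly_conj_orth (Q A : Matrix (Fin 3) (Fin 3) ℝ) (hQ : Q * Qᵀ = 1) :
    (Q * A * Qᵀ).charpoly = A.charpoly := by
  have hQ' : Qᵀ * Q = 1 := mul_eq_one_comm.mp hQ
  have h1 : Q.map (C : ℝ →+* ℝ[X]) * Qᵀ.map (C : ℝ →+* ℝ[X]) = 1 := by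
    rw [← Matrix.map_mul, hQ]; simp
  have h2 : Qᵀ.map (C : ℝ →+* ℝ[X]) * Q.map (C : ℝ →+* ℝ[X]) = 1 := by
    rw [← Matrix.map_mul, hQ']; simp
  have key : charmatrix (Q * A * Qᵀ)
      = Q.map (C : ℝ →+* ℝ[X]) * charmatrix A * Qᵀ.map (C : ℝ →+* ℝ[X]) := by
    unfold Matrix.charmatrix
    rw [Matrix.mul_sub, Matrix.sub_mul]
    congr 1
    · rw [← (Matrix.scalar_commute (X : ℝ[X]) (fun r => Commute.all _ _)
        (Q.map (C : ℝ →+* ℝ[X]))).eq, mul_assoc, h1, mul_one]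
    · simp only [RingHom.mapMatrix_apply]
      rw [← Matrix.map_mul, ← Matrix.map_mul]
  unfold Matrix.charpoly
  rw [key, Matrix.det_mul, Matrix.det_mul, mul_comm, ← mul_assoc, ← Matrix.det_mul, h2]
  simp

lemma charpoly_diag (d : Fin 3 → ℝ) :
    (Matrix.diagonal d).charpoly = ∏ i, (X - C (d i)) := by
  rw [Matrix.charpoly_of_upperTriangular _ (Matrix.blockTriangular_diagonal d)]
  simp

lemma exists_perm_of_multiset_eq {f : Fin 3 → ℝ} {x y z : ℝ}
    (h : ({f 0, f 1, f 2} : Multiset ℝ) = {x, y, z}) :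
    ∃ σ : Equiv.Perm (Fin 3), f (σ 0) = x ∧ f (σ 1) = y ∧ f (σ 2) = z := by
  classical
  have pair : ∀ a b : ℝ, (a ::ₘ {b} : Multiset ℝ) = y ::ₘ {z} →
      (a = y ∧ b = z) ∨ (a = z ∧ b = y) := by
    intro a b hab
    rcases Multiset.cons_eq_cons.mp hab with ⟨h1, h2⟩ | ⟨_, cs, h1, h2⟩
    · exact Or.inl ⟨h1, Multiset.singleton_inj.mp h2⟩
    · have hcs : cs = 0 := by
        have := congrArg Multiset.card h1
        simpa using this
      subst hcs
      rw [Multiset.cons_zero, Multiset.singleton_inj] at h1 h2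
      exact Or.inr ⟨h2.symm, h1⟩
  have h' : f 0 ::ₘ f 1 ::ₘ {f 2} = x ::ₘ y ::ₘ {z} := by
    simpa [Multiset.insert_eq_cons] using h
  have hx : x = f 0 ∨ x = f 1 ∨ x = f 2 := by
    have : x ∈ (f 0 ::ₘ f 1 ::ₘ {f 2} : Multiset ℝ) := by rw [h']; simp
    simpa [eq_comm] using this
  rcases hx with hx | hx | hx
  · rw [← hx, Multiset.cons_inj_right] at h'
    rcases pair _ _ h' with ⟨h1, h2⟩ | ⟨h1, h2⟩
    · exact ⟨1, hx.symm, h1, h2⟩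
    · exact ⟨⟨![0, 2, 1], ![0, 2, 1], by decide, by decide⟩, hx.symm, h2, h1⟩
  · rw [Multiset.cons_swap, ← hx, Multiset.cons_inj_right] at h'
    rcases pair _ _ h' with ⟨h1, h2⟩ | ⟨h1, h2⟩
    · exact ⟨⟨![1, 0, 2], ![1, 0, 2], by decide, by decide⟩, hx.symm, h1, h2⟩
    · exact ⟨⟨![1, 2, 0], ![2, 0, 1], by decide, by decide⟩, hx.symm, h2, h1⟩
  · rw [← Multiset.cons_zero (f 2), Multiset.cons_swap (f 1) (f 2),
      Multiset.cons_swap (f 0) (f 2), ← hx, Multiset.cons_inj_right,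
      Multiset.cons_zero (f 1)] at h'
    rcases pair _ _ h' with ⟨h1, h2⟩ | ⟨h1, h2⟩
    · exact ⟨⟨![2, 0, 1], ![1, 2, 0], by decide, by decide⟩, hx.symm, h1, h2⟩
    · exact ⟨⟨![2, 1, 0], ![2, 1, 0], by decide, by decide⟩, hx.symm, h2, h1⟩

lemma star_eq_transpose_real (A : Matrix (Fin 3) (Fin 3) ℝ) : star A = Aᵀ := by
  rw [Matrix.star_eq_conjTranspose, Matrix.conjTranspose_eq_transpose_of_trivial]

lemma exists_svd (M : Matrix (Fin 3) (Fin 3) ℝ) (s t : ℝ)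
    (hsv : (Mᵀ * M).charpoly = X * (X - C (s ^ 2)) * (X - C (t ^ 2))) :
    ∃ U V : Matrix (Fin 3) (Fin 3) ℝ, U * Uᵀ = 1 ∧ V * Vᵀ = 1 ∧ U.det = 1 ∧ V.det = 1 ∧
      M = U * Matrix.diagonal ![s, 0, t] * Vᵀ := by
  classical
  set A := Mᵀ * M with hAdef
  have hA : A.IsHermitian := by
    simpa [Matrix.conjTranspose_eq_transpose_of_trivial] using Matrix.isHermitian_conjTranspose_mul_self M
  set Q : Matrix (Fin 3) (Fin 3) ℝ := (hA.eigenvectorUnitary : Matrix (Fin 3) (Fin 3) ℝ)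
    with hQdef
  set μ : Fin 3 → ℝ := hA.eigenvalues with hμdef
  have hQ : Q * Qᵀ = 1 := by
    have := (Matrix.mem_unitaryGroup_iff).mp hA.eigenvectorUnitary.2
    rwa [star_eq_transpose_real] at this
  have hQ' : Qᵀ * Q = 1 := mul_eq_one_comm.mp hQ
  have spec : A = Q * Matrix.diagonal μ * Qᵀ := by
    have := hA.spectral_theorem
    rwa [Unitary.conjStarAlgAut_apply, star_eq_transpose_real, show (RCLike.ofReal ∘ hA.eigenvalues : Fin 3 → ℝ) = μ from
      funext fun i => rfl] at this
  -- charpoly of A equals product over eigenvalues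
  have hchar : A.charpoly = ∏ i, (X - C (μ i)) := by
    rw [spec, charpoly_conj_orth Q _ hQ, charpoly_diag]
  -- multiset equality
  have hms : ({μ 0, μ 1, μ 2} : Multiset ℝ) = {s ^ 2, 0, t ^ 2} := by
    have h1 : (({μ 0, μ 1, μ 2} : Multiset ℝ).map fun a => X - C a).prod
        = (({s ^ 2, 0, t ^ 2} : Multiset ℝ).map fun a => X - C a).prod := by
      simp only [Multiset.insert_eq_cons, Multiset.map_cons, Multiset.map_singleton,
        Multiset.prod_cons, Multiset.prod_singleton]
      have h3 := hchar.symm.trans hsv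
      rw [Fin.prod_univ_three] at h3
      simp only [map_zero]
      linear_combination h3
    have := congrArg Polynomial.roots h1
    rwa [Polynomial.roots_multiset_prod_X_sub_C, Polynomial.roots_multiset_prod_X_sub_C] at this
  obtain ⟨σ, hσ0, hσ1, hσ2⟩ := exists_perm_of_multiset_eq
    (x := s ^ 2) (y := 0) (z := t ^ 2) hms
  -- permuted eigenvector matrix
  set V : Matrix (Fin 3) (Fin 3) ℝ := Q.submatrix id σ with hVdef
  have hVentry : ∀ j a, V j a = Q j (σ a) := fun j a => rfl
  set d : Fin 3 → ℝ := ![s, 0, t] with hddef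
  set d2 : Fin 3 → ℝ := ![s ^ 2, 0, t ^ 2] with hd2def
  have hμσ : ∀ a, μ (σ a) = d2 a := by
    intro a; fin_cases a <;> simpa [hd2def] using (by assumption)
  have hV : V * Vᵀ = 1 := by
    ext i j
    have := congrFun (congrFun hQ i) j
    rw [Matrix.mul_apply] at this ⊢
    rw [← Equiv.sum_comp σ (fun b => Q i b * Qᵀ b j)] at this
    simpa [Matrix.transpose_apply, hVentry] using this
  have hV' : Vᵀ * V = 1 := mul_eq_one_comm.mp hV
  have specV : A = V * Matrix.diagonal d2 * Vᵀ := by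
    rw [spec]; ext i j
    rw [Matrix.mul_apply, Matrix.mul_apply]
    rw [← Equiv.sum_comp σ (fun b => (Q * Matrix.diagonal μ) i b * Qᵀ b j)]
    apply Finset.sum_congr rfl
    intro a _
    simp [Matrix.mul_apply, Matrix.diagonal, Matrix.transpose_apply, hVentry, hμσ a,
      Finset.sum_ite_eq, Matrix.of_apply]
  have hAV : A * V = V * Matrix.diagonal d2 := by
    rw [specV, mul_assoc, mul_assoc, hV', mul_one]
  set vcol : Fin 3 → EuclideanSpace ℝ (Fin 3) := fun a => WithLp.toLp 2 (fun j => V j a) with hvcol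
  have hAv : ∀ a, A *ᵥ (vcol a) = d2 a • vcol a := by
    intro a; funext j
    have := congrFun (congrFun hAV j) a
    rw [Matrix.mul_apply, Matrix.mul_diagonal] at this
    simpa [Matrix.mulVec, dotProduct, hvcol, mul_comm] using this
  have hd2d : ∀ a, d2 a = d a ^ 2 := by
    intro a; fin_cases a <;> simp [hddef, hd2def]
  have hdot : ∀ a b, (M *ᵥ vcol a) ⬝ᵥ (M *ᵥ vcol b) = d2 b * (if a = b then 1 else 0) := by
    intro a b
    have h1 : (M *ᵥ vcol a) ⬝ᵥ (M *ᵥ vcol b) = vcol a ⬝ᵥ (A *ᵥ vcol b) := by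
      rw [hAdef, ← Matrix.mulVec_mulVec, Matrix.dotProduct_mulVec (vcol a),
        Matrix.vecMul_transpose]
    rw [h1, hAv b, dotProduct_smul]
    have h2 : vcol a ⬝ᵥ vcol b = if a = b then 1 else 0 := by
      have := congrFun (congrFun hV' a) b
      rw [Matrix.mul_apply] at this
      simpa [Matrix.transpose_apply, dotProduct, hvcol, Matrix.one_apply] using this
    rw [h2]; simp
  set scol : Set (Fin 3) := {a | d a ≠ 0} with hscol
  set u : Fin 3 → EuclideanSpace ℝ (Fin 3) := fun a => WithLp.toLp 2 ((d a)⁻¹ • (fun j => (M *ᵥ vcol a) j))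
    with hu
  have hON : Orthonormal ℝ (scol.restrict u) := by
    rw [orthonormal_iff_ite]
    rintro ⟨a, ha⟩ ⟨b, hb⟩
    have ha' : d a ≠ 0 := ha
    have hb' : d b ≠ 0 := hb
    have : (inner ℝ (scol.restrict u ⟨a, ha⟩) (scol.restrict u ⟨b, hb⟩))
        = (d a)⁻¹ * ((d b)⁻¹ * ((M *ᵥ vcol a) ⬝ᵥ (M *ᵥ vcol b))) := by
      simp [hu, Set.restrict, WithLp.ofLp_smul, PiLp.inner_apply, RCLike.inner_apply, dotProduct, Finset.mul_sum,
        mul_assoc, mul_left_comm, mul_comm]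
    rw [this, hdot a b]
    by_cases hab : a = b
    · subst hab
      simp only [if_pos rfl, Subtype.mk.injEq]
      rw [hd2d]
      field_simp
    · simp [hab, Subtype.mk.injEq]
  obtain ⟨bON, hbON⟩ := hON.exists_orthonormalBasis_extension_of_card_eq (by simp)
  set U : Matrix (Fin 3) (Fin 3) ℝ := Matrix.of (fun j a => bON a j) with hUdef
  have hU' : Uᵀ * U = 1 := by
    ext a b
    have := (orthonormal_iff_ite.mp bON.orthonormal) a b
    simp only [PiLp.inner_apply, RCLike.inner_apply, starRingEnd_apply, star_trivial] at this
    rw [Matrix.mul_apply]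
    simpa [hUdef, Matrix.transpose_apply, Matrix.one_apply, mul_comm] using this
  have hU : U * Uᵀ = 1 := mul_eq_one_comm.mp hU'
  have hMV : M * V = U * Matrix.diagonal d := by
    ext j a
    have hlhs : (M * V) j a = (M *ᵥ vcol a) j := by
      simp [Matrix.mul_apply, Matrix.mulVec, dotProduct, hvcol]
    rw [hlhs, Matrix.mul_diagonal]
    by_cases hda : d a = 0
    · have hzero : M *ᵥ vcol a = 0 := by
        rw [← dotProduct_self_eq_zero, hdot a a, hd2d, hda]
        ring
      rw [hzero, hda, mul_zero]
      rfl
    · have hba : bON a = u a := hbON a hda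
      have : U j a = (d a)⁻¹ * (M *ᵥ vcol a) j := by
        rw [hUdef]
        show bON a j = _
        rw [hba, hu]
        rfl
      rw [this]
      field_simp
  have hM : M = U * Matrix.diagonal d * Vᵀ := by
    calc M = M * (V * Vᵀ) := by rw [hV, mul_one]
    _ = (M * V) * Vᵀ := by rw [mul_assoc]
    _ = U * Matrix.diagonal d * Vᵀ := by rw [hMV]
  -- determinant squares
  have hdetU2 : U.det * U.det = 1 := by
    have := congrArg Matrix.det hU
    rwa [Matrix.det_mul, Matrix.det_transpose, Matrix.det_one] at this
  have hdetV2 : V.det * V.det = 1 := by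
    have := congrArg Matrix.det hV
    rwa [Matrix.det_mul, Matrix.det_transpose, Matrix.det_one] at this
  -- sign fix
  set Ee : Matrix (Fin 3) (Fin 3) ℝ := Matrix.diagonal ![1, U.det, 1] with hEe
  set Ff : Matrix (Fin 3) (Fin 3) ℝ := Matrix.diagonal ![1, V.det, 1] with hFf
  refine ⟨U * Ee, V * Ff, ?_, ?_, ?_, ?_, ?_⟩
  · rw [Matrix.transpose_mul, hEe, Matrix.diagonal_transpose, ← mul_assoc, mul_assoc U,
      Matrix.diagonal_mul_diagonal]
    have h1 : (fun i => ![1, U.det, 1] i * ![1, U.det, 1] i) = (fun _ => (1:ℝ)) :=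
      funext fun i => by fin_cases i <;> simp [hdetU2]
    rw [h1, Matrix.diagonal_one, mul_one, hU]
  · rw [Matrix.transpose_mul, hFf, Matrix.diagonal_transpose, ← mul_assoc, mul_assoc V,
      Matrix.diagonal_mul_diagonal]
    have h1 : (fun i => ![1, V.det, 1] i * ![1, V.det, 1] i) = (fun _ => (1:ℝ)) :=
      funext fun i => by fin_cases i <;> simp [hdetV2]
    rw [h1, Matrix.diagonal_one, mul_one, hV]
  · rw [Matrix.det_mul, hEe, Matrix.det_diagonal, Fin.prod_univ_three]
    simpa using hdetU2
  · rw [Matrix.det_mul, hFf, Matrix.det_diagonal, Fin.prod_univ_three]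
    simpa using hdetV2
  · have hED : Ee * Matrix.diagonal d = Matrix.diagonal d := by
      rw [hEe, hddef, Matrix.diagonal_mul_diagonal,
        show (fun i => ![1, U.det, 1] i * ![s, 0, t] i) = ![s, 0, t] from
          funext fun i => by fin_cases i <;> simp]
    have hDF : Matrix.diagonal d * Ff = Matrix.diagonal d := by
      rw [hFf, hddef, Matrix.diagonal_mul_diagonal,
        show (fun i => ![s, 0, t] i * ![1, V.det, 1] i) = ![s, 0, t] from
          funext fun i => by fin_cases i <;> simp]
    rw [Matrix.transpose_mul, hFf, Matrix.diagonal_transpose]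
    calc M = U * Matrix.diagonal d * Vᵀ := hM
    _ = U * (Ee * Matrix.diagonal d * Ff) * Vᵀ := by rw [hED, hDF]
    _ = U * Ee * Matrix.diagonal d * (Ff * Vᵀ) := by simp only [mul_assoc]


-- complexification linearity helpers
lemma cm_sum_smul (c : Fin 3 → ℝ) (B : Fin 3 → Matrix (Fin 3) (Fin 3) ℝ) :
    cm (∑ i, c i • B i) = ∑ i, (c i : ℂ) • cm (B i) := by
  ext p q
  simp [cm, Matrix.sum_apply]

-- complexified covariance
lemma covariance_c (R : Matrix (Fin 3) (Fin 3) ℝ) (h : Rᵀ = R.adjugate) (a : Fin 3) :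
    cm R * Em a * (cm R)ᴴ = ∑ i, (R i a : ℂ) • Em i := by
  have := congrArg cm (covariance R h a)
  rw [cm_mul, cm_mul, cm_sum_smul] at this
  rw [cm_conjTranspose]
  exact this

-- kronecker and conjTranspose
lemma kron_conjT (A B : Matrix (Fin 3) (Fin 3) ℂ) : (A ⊗ₖ B)ᴴ = Aᴴ ⊗ₖ Bᴴ := by
  ext ⟨i, j⟩ ⟨k, l⟩
  simp [Matrix.conjTranspose_apply, Matrix.kroneckerMap_apply, mul_comm]

lemma kron_unitary {A B : Matrix (Fin 3) (Fin 3) ℂ} (hA : A * Aᴴ = 1) (hB : B * Bᴴ = 1) :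
    (A ⊗ₖ B) * (A ⊗ₖ B)ᴴ = 1 := by
  rw [kron_conjT, ← Matrix.mul_kronecker_mul, hA, hB, Matrix.one_kronecker_one]

lemma cm_unitary {U : Matrix (Fin 3) (Fin 3) ℝ} (hU : U * Uᵀ = 1) : cm U * (cm U)ᴴ = 1 := by
  rw [cm_conjTranspose, ← cm_mul, hU, cm_one]

-- bilinearity juggling
lemma sum_smul_kron (c : Fin 3 → ℂ) (x y : Fin 3 → Fin 3 → ℂ)
    (A B : Fin 3 → Matrix (Fin 3) (Fin 3) ℂ) :
    ∑ i, ∑ j, (∑ a, x a i * c a * y a j) • (A i ⊗ₖ B j)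
      = ∑ a, c a • ((∑ i, x a i • A i) ⊗ₖ (∑ j, y a j • B j)) := by
  ext ⟨p, q⟩ ⟨r, w⟩
  simp only [Matrix.sum_apply, Matrix.smul_apply, Matrix.kroneckerMap_apply,
    Fin.sum_univ_three, smul_eq_mul, Matrix.add_apply]
  ring

lemma conj_sum_smul (c : Fin 3 → ℂ) (B : Fin 3 → Matrix (Fin 3 × Fin 3) (Fin 3 × Fin 3) ℂ)
    (P Q : Matrix (Fin 3 × Fin 3) (Fin 3 × Fin 3) ℂ) :
    ∑ a, c a • (P * B a * Q) = P * (∑ a, c a • B a) * Q := by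
  rw [Finset.mul_sum, Finset.sum_mul]
  apply Finset.sum_congr rfl
  intro a _
  rw [Matrix.mul_smul, Matrix.smul_mul]

-- Svec kron identity
lemma svec_kron (i j : Fin 3) :
    Svec i ⊗ₖ Svec j = (Zm ⊗ₖ Zm) * ((-1 : ℂ) • (Em i ⊗ₖ Em j)) * (Zm ⊗ₖ Zm)ᴴ := by
  rw [Svec_eq i, Svec_eq j, kron_conjT, Matrix.mul_kronecker_mul, Matrix.mul_kronecker_mul]
  congr 2
  rw [Matrix.smul_kronecker, Matrix.kronecker_smul, smul_smul]
  norm_num [Complex.I_mul_I]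

lemma conj_sum_smul2 (c : Fin 3 → Fin 3 → ℂ)
    (B : Fin 3 → Fin 3 → Matrix (Fin 3 × Fin 3) (Fin 3 × Fin 3) ℂ)
    (P Q : Matrix (Fin 3 × Fin 3) (Fin 3 × Fin 3) ℂ) :
    ∑ i, ∑ j, c i j • (P * B i j * Q) = P * (∑ i, ∑ j, c i j • B i j) * Q := by
  simp only [Finset.mul_sum, Finset.sum_mul, Matrix.mul_smul, Matrix.smul_mul]

lemma mul_unitary {A B : Matrix (Fin 3 × Fin 3) (Fin 3 × Fin 3) ℂ}
    (hA : A * Aᴴ = 1) (hB : B * Bᴴ = 1) : (A * B) * (A * B)ᴴ = 1 := by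
  rw [Matrix.conjTranspose_mul]
  calc A * B * (Bᴴ * Aᴴ) = A * (B * Bᴴ) * Aᴴ := by simp only [mul_assoc]
  _ = 1 := by rw [hB, mul_one, hA]

end AuxKS

/-- If `M ∈ M₃(ℝ)` has rank at most 2 and singular values `s, t, 0`
(with `s, t ≥ 0`, i.e. the characteristic polynomial of `MᵀM` is `X(X−s²)(X−t²)`),
then `K(M)` is unitarily equivalent to `H_{s,t} = s·Sx⊗Sx + t·Sz⊗Sz`. -/
theorem K_unitarily_equiv_Hst
    (M : Matrix (Fin 3) (Fin 3) ℝ) (hM : M.rank ≤ 2)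
    (s t : ℝ) (hs : 0 ≤ s) (ht : 0 ≤ t)
    (hsv : (Mᵀ * M).charpoly = X * (X - C (s ^ 2)) * (X - C (t ^ 2))) :
    ∃ W ∈ Matrix.unitaryGroup (Fin 3 × Fin 3) ℂ,
      W * K M * Wᴴ = Hst s t := by
  classical
  obtain ⟨U, V, hU, hV, hdU, hdV, hM⟩ := exists_svd M s t hsv
  have mkadj : ∀ R : Matrix (Fin 3) (Fin 3) ℝ, R * Rᵀ = 1 → R.det = 1 → Rᵀ = R.adjugate := by
    intro R hR hdR
    have hR' : Rᵀ * R = 1 := mul_eq_one_comm.mp hR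
    calc Rᵀ = Rᵀ * (R.det • 1) := by rw [hdR]; simp
    _ = Rᵀ * (R * R.adjugate) := by rw [Matrix.mul_adjugate]
    _ = (Rᵀ * R) * R.adjugate := by rw [mul_assoc]
    _ = R.adjugate := by rw [hR', one_mul]
  have hadjU : Uᵀ = U.adjugate := mkadj U hU hdU
  have hadjV : Vᵀ = V.adjugate := mkadj V hV hdV
  set d : Fin 3 → ℝ := ![s, 0, t] with hd
  have hMij : ∀ i j, M i j = ∑ a, U i a * d a * V j a := by
    intro i j
    rw [hM, Matrix.mul_apply]
    apply Finset.sum_congr rfl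
    intro a _
    rw [Matrix.mul_diagonal, Matrix.transpose_apply]
  set ZZ : Matrix (Fin 3 × Fin 3) (Fin 3 × Fin 3) ℂ := Zm ⊗ₖ Zm with hZZdef
  set P : Matrix (Fin 3 × Fin 3) (Fin 3 × Fin 3) ℂ := cm U ⊗ₖ cm V with hPdef
  have hZZ : ZZ * ZZᴴ = 1 := kron_unitary Zm_unitary Zm_unitary
  have hZZ' : ZZᴴ * ZZ = 1 := mul_eq_one_comm.mp hZZ
  have hP : P * Pᴴ = 1 := kron_unitary (cm_unitary hU) (cm_unitary hV)
  set GD : Matrix (Fin 3 × Fin 3) (Fin 3 × Fin 3) ℂ :=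
    ∑ a, (d a : ℂ) • (Em a ⊗ₖ Em a) with hGDdef
  -- K M in terms of GD
  have hGM : (∑ i, ∑ j, (M i j : ℂ) • (Em i ⊗ₖ Em j)) = P * GD * Pᴴ := by
    have hx : ∀ i j : Fin 3, ((M i j : ℝ) : ℂ)
        = ∑ a, (U i a : ℂ) * (d a : ℂ) * (V j a : ℂ) := by
      intro i j; rw [hMij]; push_cast; rfl
    calc ∑ i, ∑ j, (M i j : ℂ) • (Em i ⊗ₖ Em j)
        = ∑ i, ∑ j, (∑ a, (U i a : ℂ) * (d a : ℂ) * (V j a : ℂ)) • (Em i ⊗ₖ Em j) := by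
          simp only [hx]
    _ = ∑ a, (d a : ℂ) • ((∑ i, (U i a : ℂ) • Em i) ⊗ₖ (∑ j, (V j a : ℂ) • Em j)) :=
          sum_smul_kron _ _ _ _ _
    _ = ∑ a, (d a : ℂ) • ((cm U * Em a * (cm U)ᴴ) ⊗ₖ (cm V * Em a * (cm V)ᴴ)) := by
          simp only [covariance_c U hadjU, covariance_c V hadjV]
    _ = ∑ a, (d a : ℂ) • (P * (Em a ⊗ₖ Em a) * Pᴴ) := by
          simp only [hPdef, Matrix.mul_kronecker_mul, ← kron_conjT]
    _ = P * GD * Pᴴ := conj_sum_smul _ _ _ _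
  have hKM : K M = ZZ * (P * (-GD) * Pᴴ) * ZZᴴ := by
    calc K M = ∑ i, ∑ j, (M i j : ℂ) • (Svec i ⊗ₖ Svec j) := rfl
    _ = ∑ i, ∑ j, (M i j : ℂ) • (ZZ * ((-1 : ℂ) • (Em i ⊗ₖ Em j)) * ZZᴴ) := by
          simp only [svec_kron, hZZdef]
    _ = ZZ * (∑ i, ∑ j, (M i j : ℂ) • ((-1 : ℂ) • (Em i ⊗ₖ Em j))) * ZZᴴ :=
          conj_sum_smul2 _ _ _ _
    _ = ZZ * (-(∑ i, ∑ j, (M i j : ℂ) • (Em i ⊗ₖ Em j))) * ZZᴴ := by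
          rw [show (∑ i, ∑ j, (M i j : ℂ) • ((-1 : ℂ) • (Em i ⊗ₖ Em j)))
              = -(∑ i, ∑ j, (M i j : ℂ) • (Em i ⊗ₖ Em j)) from by
            simp [smul_smul, Finset.sum_neg_distrib, neg_smul, mul_comm]]
    _ = ZZ * (P * (-GD) * Pᴴ) * ZZᴴ := by
          rw [hGM]
          simp only [Matrix.mul_neg, Matrix.neg_mul]
  -- Hst in terms of GD
  have hHst : Hst s t = ZZ * (-GD) * ZZᴴ := by
    have h2 := conj_sum_smul (fun a => (d a : ℂ)) (fun a => (-1 : ℂ) • (Em a ⊗ₖ Em a)) ZZ ZZᴴ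
    have h3 : (∑ a, (d a : ℂ) • ((-1 : ℂ) • (Em a ⊗ₖ Em a))) = -GD := by
      simp [hGDdef, smul_smul, Finset.sum_neg_distrib, neg_smul, mul_comm]
    rw [← h3, ← h2, Fin.sum_univ_three]
    have hd0 : d 0 = s := rfl
    have hd1 : d 1 = 0 := rfl
    have hd2 : d 2 = t := rfl
    rw [hd0, hd1, hd2]
    have hx : Sx ⊗ₖ Sx = ZZ * ((-1 : ℂ) • (Em 0 ⊗ₖ Em 0)) * ZZᴴ := by
      have := svec_kron 0 0
      simpa [Svec, hZZdef] using this
    have hz : Sz ⊗ₖ Sz = ZZ * ((-1 : ℂ) • (Em 2 ⊗ₖ Em 2)) * ZZᴴ := by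
      have := svec_kron 2 2
      simpa [Svec, hZZdef] using this
    rw [Hst, hx, hz]
    push_cast
    simp
  -- final assembly
  set W0 : Matrix (Fin 3 × Fin 3) (Fin 3 × Fin 3) ℂ := ZZ * P * ZZᴴ with hW0def
  have hZZH : ZZᴴ * (ZZᴴ)ᴴ = 1 := by rw [Matrix.conjTranspose_conjTranspose]; exact hZZ'
  have hW0u : W0 * W0ᴴ = 1 := mul_unitary (mul_unitary hZZ hP) hZZH
  have hW0u' : W0ᴴ * W0 = 1 := mul_eq_one_comm.mp hW0u
  have hcanc : ∀ X : Matrix (Fin 3 × Fin 3) (Fin 3 × Fin 3) ℂ, ZZᴴ * (ZZ * X) = X := by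
    intro X; rw [← mul_assoc, hZZ', one_mul]
  have hKW : K M = W0 * Hst s t * W0ᴴ := by
    rw [hKM, hHst, hW0def]
    simp only [Matrix.conjTranspose_mul, Matrix.conjTranspose_conjTranspose, mul_assoc]
    rw [hcanc, hcanc]
  refine ⟨W0ᴴ, ?_, ?_⟩
  · rw [Matrix.mem_unitaryGroup_iff, Matrix.star_eq_conjTranspose,
      Matrix.conjTranspose_conjTranspose]
    exact hW0u'
  · rw [hKW, Matrix.conjTranspose_conjTranspose]
    calc W0ᴴ * (W0 * Hst s t * W0ᴴ) * W0
        = (W0ᴴ * W0) * Hst s t * (W0ᴴ * W0) := by simp only [mul_assoc]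
    _ = Hst s t := by rw [hW0u']; simp
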